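/- Let f : ℝ → ℝ be convex and continuous on an interval [a,b], and let x₀ ∈ [a,b] be a point where f attains its minimum over [a,b]. Then the function x ↦ f(min x x₀) is convex on [a,b]. -/

import Mathlib

theorem clamp_min_convex (a b x₀ : ℝ) (f : ℝ → ℝ)
    (hab : a ≤ b)
    (hconv : ConvexOn ℝ (Set.Icc a b) f)
    (hcont : ContinuousOn f (Set.Icc a b))
    (hx₀ : x₀ ∈ Set.Icc a b)
    (hmin : ∀ x ∈ Set.Icc a b, f x₀ ≤ f x) :
    ConvexOn ℝ (Set.Icc a b) (fun x => f (min x x₀)) := by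
  obtain ⟨ha₀, hb₀⟩ := hx₀
  -- the map m x = min x x₀ is concave on Icc a b
  have hm : ConcaveOn ℝ (Set.Icc a b) (fun x => min x x₀) := by
    have h1 : ConcaveOn ℝ (Set.Icc a b) (fun x : ℝ => x) :=
      (LinearMap.id : ℝ →ₗ[ℝ] ℝ).concaveOn (convex_Icc a b)
    have h2 : ConcaveOn ℝ (Set.Icc a b) (fun _ : ℝ => x₀) :=
      concaveOn_const _ (convex_Icc a b)
    exact h1.inf h2
  -- image of Icc a b under m is Icc a x₀
  have himg : (fun x => min x x₀) '' Set.Icc a b = Set.Icc a x₀ := by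
    ext y
    constructor
    · rintro ⟨x, ⟨hx1, hx2⟩, rfl⟩
      exact ⟨le_min hx1 ha₀, min_le_right _ _⟩
    · rintro ⟨hy1, hy2⟩
      exact ⟨y, ⟨hy1, hy2.trans hb₀⟩, min_eq_left hy2⟩
  -- f is antitone on Icc a x₀
  have hanti : AntitoneOn f (Set.Icc a x₀) := by
    intro x hx y hy hxy
    rcases eq_or_lt_of_le (hy.2 : y ≤ x₀) with h | h
    · subst h
      exact hmin x ⟨hx.1, hx.2.trans hb₀⟩
    · -- y < x₀, x ≤ y, write y = (1-t) x + t x₀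
      have hxx₀ : x < x₀ := lt_of_le_of_lt hxy h
      set t : ℝ := (y - x) / (x₀ - x) with ht
      have hd : (0:ℝ) < x₀ - x := by linarith
      have ht0 : 0 ≤ t := div_nonneg (by linarith) hd.le
      have ht1 : t ≤ 1 := by
        rw [div_le_one hd]; linarith
      have hy' : y = (1 - t) * x + t * x₀ := by
        have hc := div_mul_cancel₀ (y - x) hd.ne'
        rw [← ht] at hc
        linear_combination -hc
      have hxmem : x ∈ Set.Icc a b := ⟨hx.1, hx.2.trans hb₀⟩
      have := hconv.2 hxmem ⟨ha₀, hb₀⟩ (by linarith : (0:ℝ) ≤ 1 - t) ht0 (by ring)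
      simp only [smul_eq_mul] at this
      rw [← hy'] at this
      have hfx := hmin x hxmem
      nlinarith
  have hsub : Set.Icc a x₀ ⊆ Set.Icc a b := Set.Icc_subset_Icc le_rfl hb₀
  have hconv2 : ConvexOn ℝ (Set.Icc a x₀) f := hconv.subset hsub (convex_Icc a x₀)
  rw [← himg] at hconv2 hanti
  exact hconv2.comp_concaveOn hm hanti
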